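/- arXiv:2604.10274 — 2 statements merged into one kernel-verified Lean document; each statement's English description precedes it below -/
import Mathlib

section
/- Let (Ω, Σ) be a measurable space, A a convex set of finite measures on Ω, Q a finite measure on Ω, and θ : [0,∞) → ℝ ∪ {+∞} proper, convex, lower semicontinuous, and strictly convex on its effective domain. Suppose P0, P1 ∈ A satisfy D_θ(P0‖Q) = D_θ(P1‖Q) = inf{D_θ(P‖Q) : P ∈ A} < ∞. Then the Q-absolutely continuous parts of P0 and P1 coincide (equivalently, dP0/dQ = dP1/dQ Q-almost everywhere). If in addition θ'_∞ = +∞, then the Q-singular parts of P0 and P1 are both zero. -/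
/- STATEMENT 11: Uniqueness of the `Q`-absolutely continuous part of finite strictly convex
minimizers (Lemma `strict_convex_unique_ac_part`). -/

open MeasureTheory ProbabilityTheory Filter
open scoped ENNReal NNReal

noncomputable section

/-- The nonnegative part of an extended real number, as an element of `ℝ≥0∞`. -/
def erealToENNReal (a : EReal) : ℝ≥0∞ :=
  if a = ⊤ then ⊤ else ENNReal.ofReal a.toReal

/-- Extended-real integral via positive/negative parts. -/
def erealIntegral {Ω : Type} [MeasurableSpace Ω] (μ : Measure Ω) (f : Ω → EReal) : EReal :=
  ((∫⁻ x, erealToENNReal (f x) ∂μ : ℝ≥0∞) : EReal)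
    - ((∫⁻ x, erealToENNReal (-f x) ∂μ : ℝ≥0∞) : EReal)

/-- Recession slope of `θ`, i.e. `lim_{t → ∞} θ t / t`. -/
def recessionSlope (θ : ℝ → EReal) : EReal :=
  Filter.limsup (fun t : ℝ => θ t * ((t⁻¹ : ℝ) : EReal)) Filter.atTop

/-- The `θ`-divergence `D_θ(P‖Q) = ∫ θ(dP_ac/dQ) dQ + θ'_∞ · P⊥(Ω)`. -/
def thetaDiv {Ω : Type} [MeasurableSpace Ω] (θ : ℝ → EReal) (P Q : Measure Ω) : EReal :=
  erealIntegral Q (fun x => θ ((P.rnDeriv Q x).toReal))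
    + recessionSlope θ * ((P.singularPart Q Set.univ : ℝ≥0∞) : EReal)

/-- `θ : [0,∞) → ℝ ∪ {+∞}` is proper, convex and lower semicontinuous. -/
structure ProperConvexLSCOn (θ : ℝ → EReal) : Prop where
  ne_bot : ∀ x : ℝ, 0 ≤ x → θ x ≠ ⊥
  exists_ne_top : ∃ x : ℝ, 0 ≤ x ∧ θ x ≠ ⊤
  convex : ∀ x y a b : ℝ, 0 ≤ x → 0 ≤ y → 0 ≤ a → 0 ≤ b → a + b = 1 →
    θ (a * x + b * y) ≤ (a : EReal) * θ x + (b : EReal) * θ y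
  lsc : LowerSemicontinuousOn θ (Set.Ici 0)

/-- `θ` is strictly convex on its effective domain (within `[0,∞)`). -/
def StrictlyConvexOnDom (θ : ℝ → EReal) : Prop :=
  ∀ x y a b : ℝ, 0 ≤ x → 0 ≤ y → x ≠ y → θ x ≠ ⊤ → θ y ≠ ⊤ → 0 < a → 0 < b → a + b = 1 →
    θ (a * x + b * y) < (a : EReal) * θ x + (b : EReal) * θ y

lemma erealToENNReal_coe (x : ℝ) : erealToENNReal (x : EReal) = ENNReal.ofReal x := by
  simp [erealToENNReal]

lemma erealToENNReal_mono {a b : EReal} (h : a ≤ b) : erealToENNReal a ≤ erealToENNReal b := by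
  rcases eq_or_ne b ⊤ with hb | hb
  · simp [erealToENNReal, hb]
  · rcases eq_or_ne a ⊥ with ha | ha
    · simp [erealToENNReal, ha]
    · have ha2 : a ≠ ⊤ := fun h2 => hb (top_le_iff.mp (h2 ▸ h))
      simp only [erealToENNReal, if_neg ha2, if_neg hb]
      exact ENNReal.ofReal_le_ofReal (EReal.toReal_le_toReal h ha hb)

lemma erealToENNReal_ne_top {a : EReal} (h : a ≠ ⊤) : erealToENNReal a ≠ ⊤ := by
  simp [erealToENNReal, h]

lemma erealToENNReal_eq_top {a : EReal} (h : erealToENNReal a ≠ ⊤) : a ≠ ⊤ := by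
  intro h2; rw [h2] at h; simp [erealToENNReal] at h

lemma ProperConvexLSCOn.ne_bot' {θ : ℝ → EReal} (hθ : ProperConvexLSCOn θ) {x : ℝ} (hx : 0 ≤ x)
    (hx2 : θ x ≠ ⊤) : θ x = ((θ x).toReal : EReal) :=
  (EReal.coe_toReal hx2 (hθ.ne_bot x hx)).symm

lemma chord_bound {θ : ℝ → EReal} (hθ : ProperConvexLSCOn θ)
    {u v x tu tv tx : ℝ} (hu : 0 ≤ u) (hv : u < v) (hx : 0 ≤ x)
    (hout : x ≤ u ∨ v ≤ x)
    (hθu : θ u = (tu : EReal)) (hθv : θ v = (tv : EReal)) (hθx : θ x = (tx : EReal)) :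
    (tv - tu) / (v - u) * x + (tu - (tv - tu) / (v - u) * u) ≤ tx := by
  set s := (tv - tu) / (v - u) with hs_def
  have hvu : (0:ℝ) < v - u := by linarith
  have hs : s * (v - u) = tv - tu := div_mul_cancel₀ _ (ne_of_gt hvu)
  rcases hout with hle | hge
  · rcases eq_or_lt_of_le hle with rfl | hlt
    · rw [hθu] at hθx
      have : tu = tx := by exact_mod_cast hθx
      nlinarith
    · -- u = α x + β v, α = (v-u)/(v-x), β = (u-x)/(v-x)
      have hvx : (0:ℝ) < v - x := by linarith
      have hα : (0:ℝ) ≤ (v-u)/(v-x) := by positivity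
      have hβ : (0:ℝ) ≤ (u-x)/(v-x) := by
        apply div_nonneg (by linarith) (by linarith)
      have hsum : (v-u)/(v-x) + (u-x)/(v-x) = 1 := by
        field_simp; ring
      have hcomb : (v-u)/(v-x) * x + (u-x)/(v-x) * v = u := by
        field_simp; ring
      have h := hθ.convex x v _ _ hx (by linarith) hα hβ hsum
      rw [hcomb, hθu, hθv, hθx] at h
      have h2 : tu ≤ (v-u)/(v-x) * tx + (u-x)/(v-x) * tv := by exact_mod_cast h
      have h3 : tu * (v - x) ≤ (v-u) * tx + (u-x) * tv := by
        have := mul_le_mul_of_nonneg_right h2 (le_of_lt hvx)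
        calc tu * (v-x) ≤ ((v-u)/(v-x) * tx + (u-x)/(v-x) * tv) * (v-x) := this
          _ = (v-u) * tx + (u-x) * tv := by field_simp
      have h4 : (s * x + (tu - s * u)) * (v - u) ≤ tx * (v - u) := by
        nlinarith [hs]
      nlinarith [h4]
  · rcases eq_or_lt_of_le hge with rfl | hlt
    · rw [hθv] at hθx
      have : tv = tx := by exact_mod_cast hθx
      nlinarith
    · -- v = α u + β x, α = (x-v)/(x-u), β = (v-u)/(x-u)
      have hxu : (0:ℝ) < x - u := by linarith
      have hα : (0:ℝ) ≤ (x-v)/(x-u) := by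
        apply div_nonneg (by linarith) (by linarith)
      have hβ : (0:ℝ) ≤ (v-u)/(x-u) := by positivity
      have hsum : (x-v)/(x-u) + (v-u)/(x-u) = 1 := by field_simp; ring
      have hcomb : (x-v)/(x-u) * u + (v-u)/(x-u) * x = v := by field_simp; ring
      have h := hθ.convex u x _ _ hu hx hα hβ hsum
      rw [hcomb, hθu, hθx, hθv] at h
      have h2 : tv ≤ (x-v)/(x-u) * tu + (v-u)/(x-u) * tx := by exact_mod_cast h
      have h3 : tv * (x - u) ≤ (x-v) * tu + (v-u) * tx := by
        have := mul_le_mul_of_nonneg_right h2 (le_of_lt hxu)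
        calc tv * (x-u) ≤ ((x-v)/(x-u) * tu + (v-u)/(x-u) * tx) * (x-u) := this
          _ = (x-v) * tu + (v-u) * tx := by field_simp
      have h4 : (s * x + (tu - s * u)) * (v - u) ≤ tx * (v - u) := by
        nlinarith [hs]
      nlinarith [h4]

lemma interior_bound {θ : ℝ → EReal} (hθ : ProperConvexLSCOn θ)
    {u v x tu tv tx : ℝ} (hu : 0 ≤ u) (huv : u < v) (hx1 : u < x) (hx2 : x < v)
    (hθu : θ u = (tu : EReal)) (hθv : θ v = (tv : EReal)) (hθx : θ x = (tx : EReal)) :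
    2 * (θ ((u+v)/2)).toReal - max tu tv ≤ tx := by
  have hv0 : (0:ℝ) ≤ v := by linarith
  have hx0 : (0:ℝ) ≤ x := by linarith
  have hm0 : (0:ℝ) ≤ (u+v)/2 := by linarith
  -- θ m is finite
  have hmconv : (1/2:ℝ) * u + (1/2:ℝ) * v = (u+v)/2 := by ring
  have hm := hθ.convex u v (1/2) (1/2) hu hv0 (by norm_num) (by norm_num) (by norm_num)
  rw [hmconv, hθu, hθv] at hm
  have hm2 : θ ((u+v)/2) ≤ (((1/2)*tu + (1/2)*tv : ℝ) : EReal) := by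
    refine le_trans hm (le_of_eq ?_)
    push_cast; rfl
  have hmt : θ ((u+v)/2) ≠ ⊤ := ne_top_of_le_ne_top (EReal.coe_ne_top _) hm2
  have hmR : θ ((u+v)/2) = ((θ ((u+v)/2)).toReal : EReal) := hθ.ne_bot' hm0 hmt
  set tm := (θ ((u+v)/2)).toReal with htm
  -- reflected point
  set y := u + v - x with hy
  have hy1 : u < y := by simp [hy]; linarith
  have hy2 : y < v := by simp [hy]; linarith
  have hy0 : (0:ℝ) ≤ y := by linarith
  -- chord upper bound at y
  have hvu : (0:ℝ) < v - u := by linarith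
  have hα : (0:ℝ) ≤ (v-y)/(v-u) := by apply div_nonneg (by linarith) (by linarith)
  have hβ : (0:ℝ) ≤ (y-u)/(v-u) := by apply div_nonneg (by linarith) (by linarith)
  have hsum : (v-y)/(v-u) + (y-u)/(v-u) = 1 := by field_simp; ring
  have hcomb : (v-y)/(v-u) * u + (y-u)/(v-u) * v = y := by field_simp; ring
  have hchord := hθ.convex u v _ _ hu hv0 hα hβ hsum
  rw [hcomb, hθu, hθv] at hchord
  have hchord2 : θ y ≤ (((v-y)/(v-u) * tu + (y-u)/(v-u) * tv : ℝ) : EReal) := by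
    refine le_trans hchord (le_of_eq ?_); push_cast; rfl
  have hcmax : (v-y)/(v-u) * tu + (y-u)/(v-u) * tv ≤ max tu tv := by
    have h1 : tu ≤ max tu tv := le_max_left _ _
    have h2 : tv ≤ max tu tv := le_max_right _ _
    have h3 := add_le_add (mul_le_mul_of_nonneg_left h1 hα) (mul_le_mul_of_nonneg_left h2 hβ)
    have h4 : (v-y)/(v-u) * (max tu tv) + (y-u)/(v-u) * (max tu tv) = max tu tv := by
      rw [← add_mul, hsum, one_mul]
    linarith
  have hyt : θ y ≠ ⊤ := ne_top_of_le_ne_top (EReal.coe_ne_top _) hchord2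
  have hyR : θ y = ((θ y).toReal : EReal) := hθ.ne_bot' hy0 hyt
  set ty := (θ y).toReal with hty
  have hty2 : ty ≤ max tu tv := by
    have : (ty : EReal) ≤ (((v-y)/(v-u) * tu + (y-u)/(v-u) * tv : ℝ) : EReal) := hyR ▸ hchord2
    have := EReal.coe_le_coe_iff.mp this
    linarith
  -- midpoint convexity between x and y
  have hmid : (1/2:ℝ) * x + (1/2:ℝ) * y = (u+v)/2 := by rw [hy]; ring
  have h := hθ.convex x y (1/2) (1/2) hx0 hy0 (by norm_num) (by norm_num) (by norm_num)
  rw [hmid, hθx, hyR, hmR] at h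
  have h2 : tm ≤ (1/2) * tx + (1/2) * ty := by exact_mod_cast h
  linarith

lemma exists_affine_minorant {θ : ℝ → EReal} (hθ : ProperConvexLSCOn θ) :
    ∃ a c : ℝ, ∀ x : ℝ, 0 ≤ x → ((a * x + c : ℝ) : EReal) ≤ θ x := by
  obtain ⟨x0, hx00, hx0t⟩ := hθ.exists_ne_top
  by_cases hex : ∃ x1, 0 ≤ x1 ∧ x1 ≠ x0 ∧ θ x1 ≠ ⊤
  · obtain ⟨x1, hx10, hne, hx1t⟩ := hex
    set u := min x0 x1 with hu_def
    set v := max x0 x1 with hv_def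
    have hu0 : 0 ≤ u := le_min hx00 hx10
    have huv : u < v := by
      rcases lt_or_gt_of_ne hne with h | h
      · rw [hu_def, hv_def, min_eq_right h.le, max_eq_left h.le]; exact h
      · rw [hu_def, hv_def, min_eq_left h.le, max_eq_right h.le]; exact h
    have hθu_t : θ u ≠ ⊤ := by
      rcases min_cases x0 x1 with ⟨h, _⟩ | ⟨h, _⟩ <;> rw [hu_def, h] <;> assumption
    have hθv_t : θ v ≠ ⊤ := by
      rcases max_cases x0 x1 with ⟨h, _⟩ | ⟨h, _⟩ <;> rw [hv_def, h] <;> assumption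
    have hθu : θ u = ((θ u).toReal : EReal) := hθ.ne_bot' hu0 hθu_t
    have hθv : θ v = ((θ v).toReal : EReal) := hθ.ne_bot' (by linarith) hθv_t
    set tu := (θ u).toReal
    set tv := (θ v).toReal
    set s := (tv - tu) / (v - u) with hs_def
    set K := 2 * (θ ((u+v)/2)).toReal - max tu tv with hK_def
    refine ⟨min s 0, min (tu - s * u) K, fun x hx => ?_⟩
    by_cases hxt : θ x = ⊤
    · rw [hxt]; exact le_top
    · have hθx : θ x = ((θ x).toReal : EReal) := hθ.ne_bot' hx hxt
      set tx := (θ x).toReal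
      rw [hθx, EReal.coe_le_coe_iff]
      by_cases hout : x ≤ u ∨ v ≤ x
      · have := chord_bound hθ hu0 huv hx hout hθu hθv hθx
        have h1 : min s 0 * x ≤ s * x :=
          mul_le_mul_of_nonneg_right (min_le_left _ _) hx
        have h2 : min (tu - s * u) K ≤ tu - s * u := min_le_left _ _
        linarith
      · push_neg at hout
        have := interior_bound hθ hu0 huv hout.1 hout.2 hθu hθv hθx
        rw [← hK_def] at this
        have h1 : min s 0 * x ≤ 0 := mul_nonpos_of_nonpos_of_nonneg (min_le_right _ _) hx
        have h2 : min (tu - s * u) K ≤ K := min_le_right _ _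
        linarith
  · push_neg at hex
    refine ⟨0, (θ x0).toReal, fun x hx => ?_⟩
    by_cases h : x = x0
    · subst h
      rw [hθ.ne_bot' hx hx0t]
      simp
    · rw [hex x hx h]
      exact le_top

lemma theta_measurable {θ : ℝ → EReal} (hθ : ProperConvexLSCOn θ)
    {Ω : Type} [MeasurableSpace Ω] {g : Ω → ℝ} (hg : Measurable g) (hg0 : ∀ x, 0 ≤ g x) :
    Measurable (fun x => θ (g x)) := by
  have hlsc : LowerSemicontinuous (fun y : Set.Ici (0:ℝ) => θ y) := by
    intro x b hb
    have h2 := hθ.lsc x x.2 b hb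
    rw [nhdsWithin_eq_map_subtype_coe x.2, eventually_map] at h2
    exact h2
  have hm : Measurable (fun y : Set.Ici (0:ℝ) => θ y) := hlsc.measurable
  have heq : (fun x => θ (g x)) =
      (fun y : Set.Ici (0:ℝ) => θ y) ∘ (fun x => (⟨g x, hg0 x⟩ : Set.Ici (0:ℝ))) := rfl
  rw [heq]
  exact hm.comp (hg.subtype_mk)

lemma recessionSlope_ne_bot {θ : ℝ → EReal} (hθ : ProperConvexLSCOn θ) :
    recessionSlope θ ≠ ⊥ := by
  obtain ⟨a, c, hac⟩ := exists_affine_minorant hθ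
  have hev : ∀ᶠ t : ℝ in atTop, ((a - |c| : ℝ) : EReal) ≤ θ t * ((t⁻¹ : ℝ) : EReal) := by
    filter_upwards [eventually_ge_atTop (1:ℝ)] with t ht
    have ht0 : (0:ℝ) < t := by linarith
    have h1 : ((a * t + c : ℝ) : EReal) ≤ θ t := hac t ht0.le
    have h2 : ((a * t + c : ℝ) : EReal) / (t : EReal) ≤ θ t / (t : EReal) :=
      EReal.monotone_div_right_of_nonneg (by exact_mod_cast ht0.le) h1
    have h3 : θ t / (t : EReal) = θ t * ((t⁻¹ : ℝ) : EReal) := by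
      rw [EReal.coe_inv]; rfl
    have h4 : ((a * t + c : ℝ) : EReal) / (t : EReal) = (((a * t + c) / t : ℝ) : EReal) := by
      rw [div_eq_mul_inv (a * t + c) t, EReal.coe_mul, EReal.coe_inv]; rfl
    rw [h3] at h2; rw [h4] at h2
    refine le_trans ?_ h2
    rw [EReal.coe_le_coe_iff]
    rw [add_div, mul_div_assoc, div_self (ne_of_gt ht0), mul_one]
    have : -|c| ≤ c / t := by
      rcases le_or_gt 0 c with h | h
      · have : 0 ≤ c / t := div_nonneg h ht0.le
        have := abs_nonneg c; linarith
      · rw [abs_of_neg h, neg_neg, le_div_iff₀ ht0]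
        nlinarith
    linarith
  have : ((a - |c| : ℝ) : EReal) ≤ recessionSlope θ :=
    le_limsup_of_frequently_le hev.frequently
  intro h
  rw [h] at this
  exact EReal.coe_ne_bot _ (le_bot_iff.mp this)

lemma measurable_erealToENNReal : Measurable erealToENNReal := by
  unfold erealToENNReal
  exact Measurable.ite (measurableSet_singleton ⊤) measurable_const
    (ENNReal.measurable_ofReal.comp measurable_ereal_toReal)

lemma coe_ennreal_eq_toReal {A : ℝ≥0∞} (h : A ≠ ⊤) : (A : EReal) = ((A.toReal : ℝ) : EReal) := by
  rw [← EReal.toReal_coe_ennreal,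
    EReal.coe_toReal (by simpa using h) (EReal.coe_ennreal_ne_bot _)]

lemma coe_sub_coe_ennreal_ne_top (x : ℝ) (y : ℝ≥0∞) : ((x : EReal) - (y : EReal)) ≠ ⊤ := by
  rcases eq_or_ne y ⊤ with rfl | hy
  · rw [EReal.coe_ennreal_top]
    simp [sub_eq_add_neg]
  · rw [coe_ennreal_eq_toReal hy, ← EReal.coe_sub]
    exact EReal.coe_ne_top _

lemma erealIntegral_eq_integral {Ω : Type} [MeasurableSpace Ω] {μ : Measure Ω} {f : Ω → EReal}
    {φ : Ω → ℝ} (hφ : Integrable φ μ) (hfφ : ∀ᵐ x ∂μ, f x = ((φ x : ℝ) : EReal)) :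
    erealIntegral μ f = ((∫ x, φ x ∂μ : ℝ) : EReal) := by
  have h1 : ∫⁻ x, erealToENNReal (f x) ∂μ = ∫⁻ x, ENNReal.ofReal (φ x) ∂μ :=
    lintegral_congr_ae (hfφ.mono fun x hx => by dsimp only; rw [hx, erealToENNReal_coe])
  have h2 : ∫⁻ x, erealToENNReal (-f x) ∂μ = ∫⁻ x, ENNReal.ofReal (-φ x) ∂μ :=
    lintegral_congr_ae (hfφ.mono fun x hx => by dsimp only; rw [hx, ← EReal.coe_neg, erealToENNReal_coe])
  have hA : ∫⁻ x, ENNReal.ofReal (φ x) ∂μ ≠ ⊤ := by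
    refine ne_of_lt (lt_of_le_of_lt
      (lintegral_mono fun x => Real.ofReal_le_enorm _) ?_)
    exact hφ.2
  have hB : ∫⁻ x, ENNReal.ofReal (-φ x) ∂μ ≠ ⊤ := by
    refine ne_of_lt (lt_of_le_of_lt
      (lintegral_mono fun x => ?_) hφ.2)
    calc ENNReal.ofReal (-φ x) ≤ ↑‖(-φ x)‖₊ := Real.ofReal_le_enorm _
      _ = ↑‖φ x‖₊ := by rw [nnnorm_neg]
  rw [erealIntegral, h1, h2, coe_ennreal_eq_toReal hA, coe_ennreal_eq_toReal hB, ← EReal.coe_sub,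
    integral_eq_lintegral_pos_part_sub_lintegral_neg_part hφ]

lemma erealIntegral_ne_top {Ω : Type} [MeasurableSpace Ω] {μ : Measure Ω} {f : Ω → EReal}
    (hA : ∫⁻ x, erealToENNReal (f x) ∂μ ≠ ⊤) : erealIntegral μ f ≠ ⊤ := by
  rw [erealIntegral, coe_ennreal_eq_toReal hA]
  exact coe_sub_coe_ennreal_ne_top _ _

lemma exists_integrable_repr {Ω : Type} [MeasurableSpace Ω] (Q : Measure Ω) [IsFiniteMeasure Q]
    {θ : ℝ → EReal} (hθ : ProperConvexLSCOn θ) (P : Measure Ω) [IsFiniteMeasure P]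
    (htop : erealIntegral Q (fun x => θ ((P.rnDeriv Q x).toReal)) ≠ ⊤) :
    ∃ φ : Ω → ℝ, Integrable φ Q ∧ (∀ᵐ x ∂Q, θ ((P.rnDeriv Q x).toReal) = ((φ x : ℝ) : EReal)) ∧
      erealIntegral Q (fun x => θ ((P.rnDeriv Q x).toReal)) = ((∫ x, φ x ∂Q : ℝ) : EReal) := by
  set r : Ω → ℝ := fun x => (P.rnDeriv Q x).toReal with hr_def
  have hr : Measurable r := (Measure.measurable_rnDeriv P Q).ennreal_toReal
  have hr0 : ∀ x, 0 ≤ r x := fun x => ENNReal.toReal_nonneg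
  set f : Ω → EReal := fun x => θ (r x) with hf_def
  have hf : Measurable f := theta_measurable hθ hr hr0
  obtain ⟨a, c, hac⟩ := exists_affine_minorant hθ
  have hBle : ∀ x, erealToENNReal (-(f x)) ≤
      ENNReal.ofReal |a| * P.rnDeriv Q x + ENNReal.ofReal |c| := by
    intro x
    have h1 : -(f x) ≤ ((|a| * r x + |c| : ℝ) : EReal) := by
      have h0 := hac (r x) (hr0 x)
      have h2 : -(f x) ≤ ((-(a * r x + c) : ℝ) : EReal) := by
        rw [EReal.coe_neg]
        exact EReal.neg_le_neg_iff.mpr h0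
      refine h2.trans ?_
      rw [EReal.coe_le_coe_iff]
      nlinarith [neg_abs_le a, le_abs_self a, hr0 x, neg_le_abs c, abs_nonneg a]
    calc erealToENNReal (-(f x)) ≤ erealToENNReal ((|a| * r x + |c| : ℝ) : EReal) :=
          erealToENNReal_mono h1
      _ = ENNReal.ofReal (|a| * r x + |c|) := erealToENNReal_coe _
      _ ≤ ENNReal.ofReal (|a| * r x) + ENNReal.ofReal |c| := ENNReal.ofReal_add_le
      _ ≤ ENNReal.ofReal |a| * P.rnDeriv Q x + ENNReal.ofReal |c| := by
          gcongr
          rw [ENNReal.ofReal_mul (abs_nonneg a)]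
          gcongr
          exact ENNReal.ofReal_toReal_le
  have hB : ∫⁻ x, erealToENNReal (-(f x)) ∂Q ≠ ⊤ := by
    refine ne_of_lt (lt_of_le_of_lt (lintegral_mono hBle) ?_)
    rw [lintegral_add_right _ measurable_const, lintegral_const,
      lintegral_const_mul _ (Measure.measurable_rnDeriv P Q)]
    exact ENNReal.add_lt_top.mpr ⟨ENNReal.mul_lt_top ENNReal.ofReal_lt_top
      (Measure.lintegral_rnDeriv_lt_top P Q),
      ENNReal.mul_lt_top ENNReal.ofReal_lt_top (measure_lt_top Q _)⟩
  have hA : ∫⁻ x, erealToENNReal (f x) ∂Q ≠ ⊤ := by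
    intro hA'
    apply htop
    show ((∫⁻ x, erealToENNReal (f x) ∂Q : ℝ≥0∞) : EReal)
      - ((∫⁻ x, erealToENNReal (-(f x)) ∂Q : ℝ≥0∞) : EReal) = ⊤
    rw [hA', EReal.coe_ennreal_top, coe_ennreal_eq_toReal hB]
    exact EReal.top_sub_coe _
  have haefin : ∀ᵐ x ∂Q, f x ≠ ⊤ := by
    have hmeas : Measurable fun x => erealToENNReal (f x) := measurable_erealToENNReal.comp hf
    filter_upwards [ae_lt_top hmeas hA] with x hx
    exact erealToENNReal_eq_top hx.ne
  have hrepr : ∀ᵐ x ∂Q, f x = (((f x).toReal : ℝ) : EReal) :=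
    haefin.mono fun x hx => hθ.ne_bot' (hr0 x) hx
  set φ : Ω → ℝ := fun x => (f x).toReal with hφ_def
  have hφm : Measurable φ := hf.ereal_toReal
  have hφint : Integrable φ Q := by
    refine ⟨hφm.aestronglyMeasurable, ?_⟩
    rw [hasFiniteIntegral_iff_norm]
    have hle : ∀ᵐ x ∂Q, ENNReal.ofReal ‖φ x‖ ≤
        erealToENNReal (f x) + erealToENNReal (-(f x)) := by
      filter_upwards [hrepr] with x hx
      rw [Real.norm_eq_abs]
      have h1 : erealToENNReal (f x) = ENNReal.ofReal (φ x) := by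
        rw [hx, erealToENNReal_coe]
      have h2 : erealToENNReal (-(f x)) = ENNReal.ofReal (-(φ x)) := by
        rw [hx, ← EReal.coe_neg, erealToENNReal_coe]
      rw [h1, h2]
      rcases le_or_gt 0 (φ x) with h | h
      · rw [abs_of_nonneg h]; exact le_self_add
      · rw [abs_of_neg h]; exact le_add_self
    calc ∫⁻ x, ENNReal.ofReal ‖φ x‖ ∂Q
        ≤ ∫⁻ x, (erealToENNReal (f x) + erealToENNReal (-(f x))) ∂Q := lintegral_mono_ae hle
      _ = ∫⁻ x, erealToENNReal (f x) ∂Q + ∫⁻ x, erealToENNReal (-(f x)) ∂Q :=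
          lintegral_add_left (measurable_erealToENNReal.comp hf) _
      _ < ⊤ := ENNReal.add_lt_top.mpr ⟨hA.lt_top, hB.lt_top⟩
  exact ⟨φ, hφint, hrepr, erealIntegral_eq_integral hφint hrepr⟩

lemma mul_nonneg_coe_ne_bot {x : EReal} (hx : x ≠ ⊥) {r : ℝ} (hr : 0 ≤ r) :
    x * (r : EReal) ≠ ⊥ := by
  induction x with
  | bot => exact absurd rfl hx
  | coe a => rw [← EReal.coe_mul]; exact EReal.coe_ne_bot _
  | top =>
    rcases eq_or_lt_of_le hr with h | h
    · rw [← h]; simp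
    · rw [EReal.top_mul_of_pos (by exact_mod_cast h)]; simp

lemma mul_coe_ennreal_ne_bot {x : EReal} (hx : x ≠ ⊥) {y : ℝ≥0∞} (hy : y ≠ ⊤) :
    x * (y : EReal) ≠ ⊥ := by
  rw [coe_ennreal_eq_toReal hy]
  exact mul_nonneg_coe_ne_bot hx ENNReal.toReal_nonneg
-- main theorem draft, to be appended after a.lean content

theorem strict_convex_unique_ac_part
    {Ω : Type} [MeasurableSpace Ω]
    (A : Set (Measure Ω))
    (hAfin : ∀ P ∈ A, IsFiniteMeasure P)
    (hAconv : ∀ P ∈ A, ∀ P' ∈ A, ∀ c c' : ℝ≥0∞, c + c' = 1 → c • P + c' • P' ∈ A)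
    (Q : Measure Ω) [IsFiniteMeasure Q]
    (θ : ℝ → EReal) (hθ : ProperConvexLSCOn θ) (hθstrict : StrictlyConvexOnDom θ)
    (P0 P1 : Measure Ω) (h0 : P0 ∈ A) (h1 : P1 ∈ A)
    (hmin0 : thetaDiv θ P0 Q = sInf {d : EReal | ∃ P ∈ A, d = thetaDiv θ P Q})
    (hmin1 : thetaDiv θ P1 Q = sInf {d : EReal | ∃ P ∈ A, d = thetaDiv θ P Q})
    (hfin : sInf {d : EReal | ∃ P ∈ A, d = thetaDiv θ P Q} ≠ ⊤) :
    Q.withDensity (P0.rnDeriv Q) = Q.withDensity (P1.rnDeriv Q) ∧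
      P0.rnDeriv Q =ᵐ[Q] P1.rnDeriv Q ∧
      (recessionSlope θ = ⊤ → P0.singularPart Q = 0 ∧ P1.singularPart Q = 0) := by
  haveI i0 : IsFiniteMeasure P0 := hAfin P0 h0
  haveI i1 : IsFiniteMeasure P1 := hAfin P1 h1
  set dstar := sInf {d : EReal | ∃ P ∈ A, d = thetaDiv θ P Q} with hdstar
  have hD0top : thetaDiv θ P0 Q ≠ ⊤ := hmin0 ▸ hfin
  have hD1top : thetaDiv θ P1 Q ≠ ⊤ := hmin1 ▸ hfin
  have hslope : recessionSlope θ ≠ ⊥ := recessionSlope_ne_bot hθ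
  set s0 := P0.singularPart Q Set.univ with hs0
  set s1 := P1.singularPart Q Set.univ with hs1
  have hs0top : s0 ≠ ⊤ := (lt_of_le_of_lt
    (Measure.singularPart_le P0 Q Set.univ) (measure_lt_top P0 _)).ne
  have hs1top : s1 ≠ ⊤ := (lt_of_le_of_lt
    (Measure.singularPart_le P1 Q Set.univ) (measure_lt_top P1 _)).ne
  have hS0bot : recessionSlope θ * (s0 : EReal) ≠ ⊥ := mul_coe_ennreal_ne_bot hslope hs0top
  have hS1bot : recessionSlope θ * (s1 : EReal) ≠ ⊥ := mul_coe_ennreal_ne_bot hslope hs1top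
  -- integral parts are not ⊤
  have hI0top : erealIntegral Q (fun x => θ ((P0.rnDeriv Q x).toReal)) ≠ ⊤ := by
    intro h
    apply hD0top
    show erealIntegral Q (fun x => θ ((P0.rnDeriv Q x).toReal))
      + recessionSlope θ * (s0 : EReal) = ⊤
    rw [h]; exact EReal.top_add_of_ne_bot hS0bot
  have hI1top : erealIntegral Q (fun x => θ ((P1.rnDeriv Q x).toReal)) ≠ ⊤ := by
    intro h
    apply hD1top
    show erealIntegral Q (fun x => θ ((P1.rnDeriv Q x).toReal))
      + recessionSlope θ * (s1 : EReal) = ⊤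
    rw [h]; exact EReal.top_add_of_ne_bot hS1bot
  obtain ⟨φ0, hφ0int, hφ0repr, hI0eq⟩ := exists_integrable_repr Q hθ P0 hI0top
  obtain ⟨φ1, hφ1int, hφ1repr, hI1eq⟩ := exists_integrable_repr Q hθ P1 hI1top
  -- singular terms are not ⊤
  have hS0top : recessionSlope θ * (s0 : EReal) ≠ ⊤ := by
    intro h
    apply hD0top
    show erealIntegral Q (fun x => θ ((P0.rnDeriv Q x).toReal))
      + recessionSlope θ * (s0 : EReal) = ⊤
    rw [h]
    apply EReal.add_top_of_ne_bot
    rw [hI0eq]; exact EReal.coe_ne_bot _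
  have hS1top : recessionSlope θ * (s1 : EReal) ≠ ⊤ := by
    intro h
    apply hD1top
    show erealIntegral Q (fun x => θ ((P1.rnDeriv Q x).toReal))
      + recessionSlope θ * (s1 : EReal) = ⊤
    rw [h]
    apply EReal.add_top_of_ne_bot
    rw [hI1eq]; exact EReal.coe_ne_bot _
  -- if the slope is ⊤ the singular parts vanish
  have hsing_zero : recessionSlope θ = ⊤ → P0.singularPart Q = 0 ∧ P1.singularPart Q = 0 := by
    intro htopsl
    constructor
    · rw [← Measure.measure_univ_eq_zero]
      by_contra hzero
      apply hS0top
      rw [htopsl]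
      exact EReal.top_mul_of_pos (EReal.coe_ennreal_pos.mpr (pos_iff_ne_zero.mpr hzero))
    · rw [← Measure.measure_univ_eq_zero]
      by_contra hzero
      apply hS1top
      rw [htopsl]
      exact EReal.top_mul_of_pos (EReal.coe_ennreal_pos.mpr (pos_iff_ne_zero.mpr hzero))
  -- the singular terms as real numbers
  obtain ⟨S0r, S1r, hS0eq, hS1eq, hSPr⟩ :
      ∃ S0r S1r : ℝ, recessionSlope θ * (s0 : EReal) = (S0r : EReal) ∧
        recessionSlope θ * (s1 : EReal) = (S1r : EReal) ∧
        recessionSlope θ * (((1/2 : ℝ≥0∞) * s0 + (1/2 : ℝ≥0∞) * s1 : ℝ≥0∞) : EReal)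
          = ((1/2 * S0r + 1/2 * S1r : ℝ) : EReal) := by
    rcases eq_or_ne (recessionSlope θ) ⊤ with hsl | hsl
    · have hz0 : s0 = 0 := by
        by_contra hzero
        apply hS0top
        rw [hsl]
        exact EReal.top_mul_of_pos (EReal.coe_ennreal_pos.mpr (pos_iff_ne_zero.mpr hzero))
      have hz1 : s1 = 0 := by
        by_contra hzero
        apply hS1top
        rw [hsl]
        exact EReal.top_mul_of_pos (EReal.coe_ennreal_pos.mpr (pos_iff_ne_zero.mpr hzero))
      have hmul0 : recessionSlope θ * ((0:ℝ≥0∞) : EReal) = ((0:ℝ) : EReal) := by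
        rw [EReal.coe_ennreal_zero, mul_zero]
        exact EReal.coe_zero.symm
      refine ⟨0, 0, ?_, ?_, ?_⟩
      · rw [hz0]
        convert hmul0 using 2
      · rw [hz1]
        convert hmul0 using 2
      · rw [hz0, hz1]
        have hz : ((1/2 : ℝ≥0∞) * 0 + (1/2 : ℝ≥0∞) * 0 : ℝ≥0∞) = 0 := by simp
        rw [hz]
        convert hmul0 using 2
        norm_num
    · obtain ⟨l, hslR⟩ : ∃ l : ℝ, recessionSlope θ = (l : EReal) :=
        ⟨(recessionSlope θ).toReal, (EReal.coe_toReal hsl hslope).symm⟩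
      refine ⟨l * s0.toReal, l * s1.toReal, ?_, ?_, ?_⟩
      · rw [hslR, coe_ennreal_eq_toReal hs0top, ← EReal.coe_mul]
      · rw [hslR, coe_ennreal_eq_toReal hs1top, ← EReal.coe_mul]
      · have hne : ((1/2 : ℝ≥0∞) * s0 + (1/2 : ℝ≥0∞) * s1 : ℝ≥0∞) ≠ ⊤ := by
          exact ENNReal.add_ne_top.mpr ⟨ENNReal.mul_ne_top (by norm_num) hs0top,
            ENNReal.mul_ne_top (by norm_num) hs1top⟩
        rw [hslR, coe_ennreal_eq_toReal hne, ← EReal.coe_mul]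
        rw [EReal.coe_eq_coe_iff]
        rw [ENNReal.toReal_add (ENNReal.mul_ne_top (by norm_num) hs0top)
          (ENNReal.mul_ne_top (by norm_num) hs1top), ENNReal.toReal_mul, ENNReal.toReal_mul]
        have h12 : ((1/2 : ℝ≥0∞)).toReal = 1/2 := by norm_num
        rw [h12]
        ring
  -- a.e. equality of the densities
  have hae : P0.rnDeriv Q =ᵐ[Q] P1.rnDeriv Q := by
    by_contra hne
    set P : Measure Ω := (1/2 : ℝ≥0∞) • P0 + (1/2 : ℝ≥0∞) • P1 with hP
    haveI iP0h : IsFiniteMeasure ((1/2 : ℝ≥0∞) • P0) := by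
      constructor
      rw [Measure.smul_apply, smul_eq_mul]
      exact ENNReal.mul_lt_top (by norm_num) (measure_lt_top P0 _)
    haveI iP1h : IsFiniteMeasure ((1/2 : ℝ≥0∞) • P1) := by
      constructor
      rw [Measure.smul_apply, smul_eq_mul]
      exact ENNReal.mul_lt_top (by norm_num) (measure_lt_top P1 _)
    haveI iP : IsFiniteMeasure P := by rw [hP]; infer_instance
    have hPA : P ∈ A := by
      rw [hP]; exact hAconv P0 h0 P1 h1 _ _ (ENNReal.add_halves 1)
    have h2ne : (1/2 : ℝ≥0∞) ≠ ⊤ := by norm_num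
    have hrn : P.rnDeriv Q =ᵐ[Q]
        fun x => (1/2 : ℝ≥0∞) * P0.rnDeriv Q x + (1/2 : ℝ≥0∞) * P1.rnDeriv Q x := by
      filter_upwards [Measure.rnDeriv_add ((1/2:ℝ≥0∞)•P0) ((1/2:ℝ≥0∞)•P1) Q,
        Measure.rnDeriv_smul_left_of_ne_top P0 Q h2ne,
        Measure.rnDeriv_smul_left_of_ne_top P1 Q h2ne] with x hx h0x h1x
      simp only [Pi.add_apply, Pi.smul_apply, smul_eq_mul] at hx h0x h1x
      rw [hP]
      rw [hx, h0x, h1x]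
    have hsingP : P.singularPart Q Set.univ = (1/2 : ℝ≥0∞) * s0 + (1/2 : ℝ≥0∞) * s1 := by
      have hc : (1/2 : ℝ≥0∞) = ((1/2 : ℝ≥0) : ℝ≥0∞) := by norm_num
      have e0 : ((1/2:ℝ≥0∞) • P0).singularPart Q = (1/2:ℝ≥0∞) • P0.singularPart Q := by
        rw [hc]
        simp only [← ENNReal.smul_def]
        exact Measure.singularPart_smul P0 Q _
      have e1 : ((1/2:ℝ≥0∞) • P1).singularPart Q = (1/2:ℝ≥0∞) • P1.singularPart Q := by
        rw [hc]
        simp only [← ENNReal.smul_def]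
        exact Measure.singularPart_smul P1 Q _
      rw [hP, Measure.singularPart_add, e0, e1, Measure.add_apply, Measure.smul_apply,
        Measure.smul_apply, smul_eq_mul, smul_eq_mul]
    have hlt0 := Measure.rnDeriv_lt_top P0 Q
    have hlt1 := Measure.rnDeriv_lt_top P1 Q
    set ψ : Ω → ℝ := fun x => 1/2 * φ0 x + 1/2 * φ1 x with hψ
    have hψint : Integrable ψ Q := (hφ0int.const_mul _).add (hφ1int.const_mul _)
    have hconv_ae : ∀ᵐ x ∂Q, θ ((P.rnDeriv Q x).toReal) ≤ ((ψ x : ℝ) : EReal) ∧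
        ((P0.rnDeriv Q x).toReal ≠ (P1.rnDeriv Q x).toReal →
          θ ((P.rnDeriv Q x).toReal) < ((ψ x : ℝ) : EReal)) := by
      filter_upwards [hrn, hlt0, hlt1, hφ0repr, hφ1repr] with x hx h0x h1x hr0 hr1
      set t0 := (P0.rnDeriv Q x).toReal with ht0def
      set t1 := (P1.rnDeriv Q x).toReal with ht1def
      have ht0 : 0 ≤ t0 := ENNReal.toReal_nonneg
      have ht1 : 0 ≤ t1 := ENNReal.toReal_nonneg
      have hmidr : (P.rnDeriv Q x).toReal = 1/2 * t0 + 1/2 * t1 := by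
        rw [hx, ENNReal.toReal_add (ENNReal.mul_ne_top (by norm_num) h0x.ne)
          (ENNReal.mul_ne_top (by norm_num) h1x.ne), ENNReal.toReal_mul, ENNReal.toReal_mul]
        norm_num; rfl
      have hrhs : (((1:ℝ)/2 : ℝ) : EReal) * θ t0 + (((1:ℝ)/2 : ℝ) : EReal) * θ t1
          = ((ψ x : ℝ) : EReal) := by
        rw [hr0, hr1, ← EReal.coe_mul, ← EReal.coe_mul, ← EReal.coe_add]
      constructor
      · have h := hθ.convex t0 t1 (1/2) (1/2) ht0 ht1 (by norm_num) (by norm_num) (by norm_num)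
        rw [hmidr, ← hrhs]
        exact h
      · intro hne2
        have h := hθstrict t0 t1 (1/2) (1/2) ht0 ht1 hne2
          (by rw [hr0]; exact EReal.coe_ne_top _) (by rw [hr1]; exact EReal.coe_ne_top _)
          (by norm_num) (by norm_num) (by norm_num)
        rw [hmidr, ← hrhs]
        exact h
    have hAmid : ∫⁻ x, erealToENNReal (θ ((P.rnDeriv Q x).toReal)) ∂Q ≠ ⊤ := by
      refine ne_of_lt (lt_of_le_of_lt
        (lintegral_mono_ae (g := fun x => ENNReal.ofReal (ψ x)) ?_) ?_)
      · filter_upwards [hconv_ae] with x hx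
        calc erealToENNReal (θ ((P.rnDeriv Q x).toReal))
            ≤ erealToENNReal ((ψ x : ℝ) : EReal) := erealToENNReal_mono hx.1
          _ = ENNReal.ofReal (ψ x) := erealToENNReal_coe _
      · exact lt_of_le_of_lt (lintegral_mono fun x => Real.ofReal_le_enorm _) hψint.2
    obtain ⟨φm, hφmint, hφmrepr, hImeq⟩ :=
      exists_integrable_repr Q hθ P (erealIntegral_ne_top hAmid)
    have hle_ae : φm ≤ᵐ[Q] ψ := by
      filter_upwards [hφmrepr, hconv_ae] with x h1x h2x
      have h := h2x.1
      rw [h1x] at h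
      exact EReal.coe_le_coe_iff.mp h
    have hneT : ¬ (∀ᵐ x ∂Q, (P0.rnDeriv Q x).toReal = (P1.rnDeriv Q x).toReal) := by
      intro h
      apply hne
      filter_upwards [h, hlt0, hlt1] with x hx h0x h1x
      exact (ENNReal.toReal_eq_toReal_iff' h0x.ne h1x.ne).mp hx
    have hint_le : ∫ x, φm x ∂Q ≤ ∫ x, ψ x ∂Q := integral_mono_ae hφmint hψint hle_ae
    have hint_ne : ∫ x, φm x ∂Q ≠ ∫ x, ψ x ∂Q := by
      intro heq
      apply hneT
      have hsub : Integrable (fun x => ψ x - φm x) Q := hψint.sub hφmint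
      have hnn : 0 ≤ᵐ[Q] fun x => ψ x - φm x := hle_ae.mono fun x hx => sub_nonneg.mpr hx
      have hz : ∫ x, (ψ x - φm x) ∂Q = 0 := by
        rw [integral_sub hψint hφmint, heq, sub_self]
      have hzero := (integral_eq_zero_iff_of_nonneg_ae hnn hsub).mp hz
      filter_upwards [hzero, hconv_ae, hφmrepr] with x hx hcx hrx
      by_contra hne3
      have h := hcx.2 hne3
      rw [hrx] at h
      have h2 := EReal.coe_lt_coe_iff.mp h
      have hx0 : ψ x - φm x = 0 := hx
      linarith
    have hint_lt : ∫ x, φm x ∂Q < ∫ x, ψ x ∂Q := lt_of_le_of_ne hint_le hint_ne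
    have hψval : ∫ x, ψ x ∂Q = 1/2 * ∫ x, φ0 x ∂Q + 1/2 * ∫ x, φ1 x ∂Q := by
      rw [hψ]
      rw [integral_add (hφ0int.const_mul _) (hφ1int.const_mul _),
        integral_const_mul, integral_const_mul]
    have hle_star : dstar ≤ thetaDiv θ P Q := sInf_le ⟨P, hPA, rfl⟩
    have hDPval : thetaDiv θ P Q
        = ((∫ x, φm x ∂Q + (1/2 * S0r + 1/2 * S1r) : ℝ) : EReal) := by
      show erealIntegral Q (fun x => θ ((P.rnDeriv Q x).toReal))
        + recessionSlope θ * ((P.singularPart Q Set.univ : ℝ≥0∞) : EReal) = _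
      rw [hImeq, hsingP, hSPr, ← EReal.coe_add]
    have hD0val : thetaDiv θ P0 Q = ((∫ x, φ0 x ∂Q + S0r : ℝ) : EReal) := by
      show erealIntegral Q (fun x => θ ((P0.rnDeriv Q x).toReal))
        + recessionSlope θ * (s0 : EReal) = _
      rw [hI0eq, hS0eq, ← EReal.coe_add]
    have hD1val : thetaDiv θ P1 Q = ((∫ x, φ1 x ∂Q + S1r : ℝ) : EReal) := by
      show erealIntegral Q (fun x => θ ((P1.rnDeriv Q x).toReal))
        + recessionSlope θ * (s1 : EReal) = _
      rw [hI1eq, hS1eq, ← EReal.coe_add]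
    have heq01 : ∫ x, φ0 x ∂Q + S0r = ∫ x, φ1 x ∂Q + S1r := by
      have h := hmin0.trans hmin1.symm
      rw [hD0val, hD1val] at h
      exact_mod_cast h
    have hfinal : dstar ≤ ((∫ x, φm x ∂Q + (1/2 * S0r + 1/2 * S1r) : ℝ) : EReal) :=
      hDPval ▸ hle_star
    rw [← hmin0, hD0val] at hfinal
    have hreal : ∫ x, φ0 x ∂Q + S0r ≤ ∫ x, φm x ∂Q + (1/2 * S0r + 1/2 * S1r) := by
      exact_mod_cast hfinal
    rw [hψval] at hint_lt
    linarith
  exact ⟨withDensity_congr_ae hae, hae, hsing_zero⟩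
end
end

section
/- Fix ι ∈ {0,1}. If π0, π1 ∈ Π_ι are both level-optimal maximin, then the ν_ῑ-absolutely continuous parts of their opposite marginals coincide: the absolutely continuous component of ν_ῑ^{(π0)} in its Lebesgue decomposition with respect to ν_ῑ equals that of ν_ῑ^{(π1)}. -/
/- STATEMENT 12: Uniqueness of the absolutely continuous opposite marginal
(Corollary `unique_ac_opposite_marginal_level_opt_maximin`).  The side `ι ∈ {0,1}` is
formalized abstractly: `X` plays the role of `Ω_ι` and `Y` of `Ω_ῑ`. -/

open MeasureTheory ProbabilityTheory Filter
open scoped ENNReal NNReal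

noncomputable section

variable {X Y : Type} [MeasurableSpace X] [MeasurableSpace Y]

/-- Refinements of `νX` on side `X`: finite plans concentrated on `E` with `X`-marginal `νX`. -/
def Plans (E : Set (X × Y)) (νX : Measure X) : Set (Measure (X × Y)) :=
  {π | IsFiniteMeasure π ∧ π Eᶜ = 0 ∧ π.map Prod.fst = νX}

/-- Refinements of `νY` on side `Y`. -/
def PlansSnd (E : Set (X × Y)) (νY : Measure Y) : Set (Measure (X × Y)) :=
  {π | IsFiniteMeasure π ∧ π Eᶜ = 0 ∧ π.map Prod.snd = νY}

/-- Capped feasible subplans at level `t`. -/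
def Feas (E : Set (X × Y)) (νX : Measure X) (νY : Measure Y) (t : ℝ) :
    Set (Measure (X × Y)) :=
  {σ | IsFiniteMeasure σ ∧ σ Eᶜ = 0 ∧ σ.map Prod.fst ≤ νX ∧
    σ.map Prod.snd ≤ (ENNReal.ofReal t) • νY}

/-- Maximal feasible mass at level `t`. -/
def Fit (E : Set (X × Y)) (νX : Measure X) (νY : Measure Y) (t : ℝ) : ℝ≥0∞ :=
  ⨆ σ ∈ Feas E νX νY t, σ Set.univ

/-- Level-optimal maximin: at every level `t > 0` the truncated opposite marginal mass
realizes the maximal feasible mass. -/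
def LevelOptMaximin (E : Set (X × Y)) (νX : Measure X) (νY : Measure Y)
    (π : Measure (X × Y)) : Prop :=
  ∀ t : ℝ, 0 < t →
    ∫⁻ y, min ((π.map Prod.snd).rnDeriv νY y) (ENNReal.ofReal t) ∂νY = Fit E νX νY t


lemma map_snd_withDensity (π : Measure (X × Y)) (g : Y → ℝ≥0∞) (hg : Measurable g) :
    (π.withDensity (fun p => g p.2)).map Prod.snd = (π.map Prod.snd).withDensity g := by
  ext A hA
  rw [Measure.map_apply measurable_snd hA, withDensity_apply _ (measurable_snd hA),
    withDensity_apply _ hA, ← lintegral_indicator (measurable_snd hA),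
    ← lintegral_indicator hA, lintegral_map (hg.indicator hA) measurable_snd]
  exact lintegral_congr fun p => by classical
    by_cases hp : p.2 ∈ A <;> simp [hp]

lemma le_fit {E : Set (X × Y)} (hEm : MeasurableSet E) (νX : Measure X) (νY : Measure Y)
    [IsFiniteMeasure νY] (π : Measure (X × Y)) [IsFiniteMeasure π]
    (hπE : π Eᶜ = 0) (hπX : π.map Prod.fst ≤ νX) (t : ℝ) :
    ∫⁻ y, min ((π.map Prod.snd).rnDeriv νY y) (ENNReal.ofReal t) ∂νY ≤ Fit E νX νY t := by
  classical
  set P := π.map Prod.snd with hP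
  haveI : IsFiniteMeasure P := Measure.isFiniteMeasure_map π Prod.snd
  set r := P.rnDeriv νY with hr
  obtain ⟨s, hs, hs1, hs2⟩ := Measure.mutuallySingular_singularPart P νY
  set g : Y → ℝ≥0∞ := s.indicator (fun y => min (r y) (ENNReal.ofReal t) / r y) with hg
  have hrm : Measurable r := Measure.measurable_rnDeriv P νY
  have hgm : Measurable g := ((hrm.min measurable_const).div hrm).indicator hs
  have hg1 : ∀ y, g y ≤ 1 := by
    intro y
    by_cases hy : y ∈ s
    · rw [hg, Set.indicator_of_mem hy]
      exact le_trans (ENNReal.div_le_div_right (min_le_left _ _) _) ENNReal.div_self_le_one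
    · rw [hg, Set.indicator_of_notMem hy]
      exact zero_le_one
  set σ := π.withDensity (fun p => g p.2) with hσ
  have hσle : σ ≤ π := by
    rw [Measure.le_iff]
    intro A hA
    rw [hσ, withDensity_apply _ hA]
    calc ∫⁻ p in A, g p.2 ∂π ≤ ∫⁻ _ in A, 1 ∂π := lintegral_mono fun p => hg1 _
    _ = π A := by simp
  have hσsnd : σ.map Prod.snd = νY.withDensity (fun y => min (r y) (ENNReal.ofReal t)) := by
    rw [hσ, map_snd_withDensity π g hgm, ← hP]
    conv_lhs => rw [← Measure.rnDeriv_add_singularPart P νY]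
    rw [withDensity_add_measure, ← hr, ← withDensity_mul _ hrm hgm]
    have h1 : (P.singularPart νY).withDensity g = 0 := by
      have hae : g =ᵐ[P.singularPart νY] 0 := by
        filter_upwards [MeasureTheory.measure_eq_zero_iff_ae_notMem.mp hs1] with y hy
        rw [hg]
        exact Set.indicator_of_notMem hy _
      rw [withDensity_congr_ae hae, withDensity_zero]
    have h2 : r * g =ᵐ[νY] fun y => min (r y) (ENNReal.ofReal t) := by
      have hsae : ∀ᵐ y ∂νY, y ∈ s := by
        rw [MeasureTheory.ae_iff]
        exact hs2
      filter_upwards [Measure.rnDeriv_lt_top P νY, hsae] with y hlt hys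
      simp only [Pi.mul_apply]
      rw [hg, Set.indicator_of_mem hys]
      by_cases h0 : r y = 0
      · simp [h0]
      · exact ENNReal.mul_div_cancel h0 hlt.ne
    rw [withDensity_congr_ae h2, h1, add_zero]
  have hσFeas : σ ∈ Feas E νX νY t := by
    refine ⟨isFiniteMeasure_of_le π hσle, ?_, ?_, ?_⟩
    · exact le_antisymm (le_trans (hσle Eᶜ) hπE.le) zero_le
    · exact le_trans (Measure.map_mono hσle measurable_fst) hπX
    · rw [hσsnd, ← withDensity_const]
      exact withDensity_mono (Filter.Eventually.of_forall fun y => min_le_right _ _)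
  have hmass : σ Set.univ = ∫⁻ y, min (r y) (ENNReal.ofReal t) ∂νY := by
    have : σ Set.univ = (σ.map Prod.snd) Set.univ := by
      rw [Measure.map_apply measurable_snd MeasurableSet.univ, Set.preimage_univ]
    rw [this, hσsnd, withDensity_apply _ MeasurableSet.univ, Measure.restrict_univ]
  calc ∫⁻ y, min (r y) (ENNReal.ofReal t) ∂νY = σ Set.univ := hmass.symm
  _ ≤ Fit E νX νY t := le_biSup (fun σ => σ Set.univ) hσFeas


lemma ennreal_lt_aux {a b : ℝ≥0∞} (hab : a < b) :
    ∃ q : ℚ, 0 < q ∧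
      (2⁻¹ : ℝ≥0∞) * (min a (ENNReal.ofReal q) + min b (ENNReal.ofReal q))
        ≠ min ((2⁻¹ : ℝ≥0∞) * (a + b)) (ENNReal.ofReal q) := by
  obtain ⟨q, _, haq, hqb⟩ := ENNReal.lt_iff_exists_rat_btwn.mp hab
  have hofReal : ENNReal.ofReal (q : ℝ) = ((Real.toNNReal q : ℝ≥0) : ℝ≥0∞) := rfl
  set t : ℝ≥0∞ := ((Real.toNNReal q : ℝ≥0) : ℝ≥0∞) with ht
  have htne : t ≠ ∞ := ENNReal.coe_ne_top
  have hane : a ≠ ∞ := (haq.trans_le le_top).ne_top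
  have hq0 : (0 : ℚ) < q := by
    have h0t : (0 : ℝ≥0∞) < t := lt_of_le_of_lt zero_le haq
    have : 0 < Real.toNNReal q := by
      rw [ht] at h0t
      exact ENNReal.coe_pos.mp h0t
    exact_mod_cast Real.toNNReal_pos.mp this
  refine ⟨q, hq0, ?_⟩
  rw [hofReal, min_eq_left haq.le, min_eq_right hqb.le]
  have h2ne0 : (2⁻¹ : ℝ≥0∞) ≠ 0 := by simp
  have h2net : (2⁻¹ : ℝ≥0∞) ≠ ∞ := by simp
  have h1 : (2⁻¹ : ℝ≥0∞) * (a + t) < t := by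
    have : a + t < t + t := ENNReal.add_lt_add_right htne haq
    have h2 : (2⁻¹ : ℝ≥0∞) * (a + t) < 2⁻¹ * (t + t) :=
      (ENNReal.mul_lt_mul_iff_right h2ne0 h2net).mpr this
    calc (2⁻¹ : ℝ≥0∞) * (a + t) < 2⁻¹ * (t + t) := h2
    _ = t := by
      rw [← two_mul, ← mul_assoc, ENNReal.inv_mul_cancel two_ne_zero ENNReal.ofNat_ne_top, one_mul]
  have h2 : (2⁻¹ : ℝ≥0∞) * (a + t) < 2⁻¹ * (a + b) :=
    (ENNReal.mul_lt_mul_iff_right h2ne0 h2net).mpr (ENNReal.add_lt_add_left hane hqb)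
  exact (lt_min h2 h1).ne

lemma ennreal_eq_of_forall_rat {a b : ℝ≥0∞}
    (h : ∀ q : ℚ, 0 < q →
      (2⁻¹ : ℝ≥0∞) * (min a (ENNReal.ofReal q) + min b (ENNReal.ofReal q))
        = min ((2⁻¹ : ℝ≥0∞) * (a + b)) (ENNReal.ofReal q)) : a = b := by
  by_contra hne
  rcases Ne.lt_or_gt hne with hab | hba
  · obtain ⟨q, hq, hq2⟩ := ennreal_lt_aux hab
    exact hq2 (h q hq)
  · obtain ⟨q, hq, hq2⟩ := ennreal_lt_aux hba
    refine hq2 ?_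
    rw [add_comm (min b _), add_comm b a]
    exact h q hq

theorem unique_ac_opposite_marginal_level_opt_maximin
    [TopologicalSpace X] [PolishSpace X] [BorelSpace X]
    [TopologicalSpace Y] [PolishSpace Y] [BorelSpace Y]
    (E : Set (X × Y)) (hE : IsClosed E)
    (νX : Measure X) (νY : Measure Y) [IsFiniteMeasure νX] [IsFiniteMeasure νY]
    (hνX : 0 < νX Set.univ) (hνY : 0 < νY Set.univ)
    (hNbhdX : ∀ x : X, ∃ y : Y, (x, y) ∈ E) (hNbhdY : ∀ y : Y, ∃ x : X, (x, y) ∈ E)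
    (π0 π1 : Measure (X × Y)) (hπ0 : π0 ∈ Plans E νX) (hπ1 : π1 ∈ Plans E νX)
    (hlom0 : LevelOptMaximin E νX νY π0) (hlom1 : LevelOptMaximin E νX νY π1) :
    νY.withDensity ((π0.map Prod.snd).rnDeriv νY)
      = νY.withDensity ((π1.map Prod.snd).rnDeriv νY) := by
  classical
  obtain ⟨hfin0, hE0, hX0⟩ := hπ0
  obtain ⟨hfin1, hE1, hX1⟩ := hπ1
  haveI := hfin0; haveI := hfin1
  set r0 := (π0.map Prod.snd).rnDeriv νY with hr0
  set r1 := (π1.map Prod.snd).rnDeriv νY with hr1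
  have hm0 : Measurable r0 := Measure.measurable_rnDeriv _ _
  have hm1 : Measurable r1 := Measure.measurable_rnDeriv _ _
  haveI : IsFiniteMeasure (π0.map Prod.snd) := Measure.isFiniteMeasure_map _ _
  haveI : IsFiniteMeasure (π1.map Prod.snd) := Measure.isFiniteMeasure_map _ _
  suffices h : r0 =ᵐ[νY] r1 by exact withDensity_congr_ae h
  set π : Measure (X × Y) := ((2 : ℝ≥0)⁻¹) • (π0 + π1) with hπdef
  haveI : IsFiniteMeasure π := by
    rw [hπdef]; infer_instance
  have hπE : π Eᶜ = 0 := by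
    rw [hπdef]; simp [hE0, hE1]
  have hπX : π.map Prod.fst ≤ νX := by
    rw [hπdef, Measure.map_smul, Measure.map_add _ _ measurable_fst, hX0, hX1,
      ← two_smul ℝ≥0 νX, smul_smul, inv_mul_cancel₀ (two_ne_zero), one_smul]
  have hmapsnd : π.map Prod.snd = ((2 : ℝ≥0)⁻¹) • (π0.map Prod.snd + π1.map Prod.snd) := by
    rw [hπdef, Measure.map_smul, Measure.map_add _ _ measurable_snd]
  have hrb : (π.map Prod.snd).rnDeriv νY =ᵐ[νY] fun y => (2⁻¹ : ℝ≥0∞) * (r0 y + r1 y) := by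
    rw [hmapsnd]
    have h1 := Measure.rnDeriv_smul_left (π0.map Prod.snd + π1.map Prod.snd) νY (2 : ℝ≥0)⁻¹
    have h2 := Measure.rnDeriv_add (π0.map Prod.snd) (π1.map Prod.snd) νY
    filter_upwards [h1, h2] with y hy1 hy2
    rw [hy1]
    simp only [Pi.smul_apply, hy2, Pi.add_apply]
    simp only [ENNReal.smul_def, ENNReal.coe_inv (two_ne_zero), ENNReal.coe_two, smul_eq_mul, mul_add]
    rfl
  have key : ∀ t : ℝ, 0 < t →
      (fun y => (2⁻¹ : ℝ≥0∞) * (min (r0 y) (ENNReal.ofReal t) + min (r1 y) (ENNReal.ofReal t)))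
        =ᵐ[νY] fun y => min ((2⁻¹ : ℝ≥0∞) * (r0 y + r1 y)) (ENNReal.ofReal t) := by
    intro t ht
    set t' := ENNReal.ofReal t with ht'
    have hC_le : ∫⁻ y, min ((π.map Prod.snd).rnDeriv νY y) t' ∂νY ≤ Fit E νX νY t :=
      le_fit hE.measurableSet νX νY π hπE hπX t
    have hgm : Measurable fun y => min ((2⁻¹ : ℝ≥0∞) * (r0 y + r1 y)) t' :=
      ((measurable_const.mul (hm0.add hm1)).min measurable_const)
    have hCeq : ∫⁻ y, min ((π.map Prod.snd).rnDeriv νY y) t' ∂νY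
        = ∫⁻ y, min ((2⁻¹ : ℝ≥0∞) * (r0 y + r1 y)) t' ∂νY := by
      refine lintegral_congr_ae ?_
      filter_upwards [hrb] with y hy
      rw [hy]
    have hFitne : Fit E νX νY t ≠ ∞ := by
      rw [← hlom0 t ht]
      refine ne_top_of_le_ne_top ?_ (lintegral_mono fun y => min_le_right _ _)
      rw [lintegral_const]
      exact ENNReal.mul_ne_top ENNReal.ofReal_ne_top (measure_ne_top νY Set.univ)
    have hIntLHS : ∫⁻ y, (2⁻¹ : ℝ≥0∞) * (min (r0 y) t' + min (r1 y) t') ∂νY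
        = Fit E νX νY t := by
      rw [lintegral_const_mul _ (f := fun y => min (r0 y) t' + min (r1 y) t') ((hm0.min measurable_const).add (hm1.min measurable_const)),
        lintegral_add_left (hm0.min measurable_const), hlom0 t ht, hlom1 t ht,
        ← two_mul, ← mul_assoc, ENNReal.inv_mul_cancel two_ne_zero ENNReal.ofNat_ne_top, one_mul]
    have hle_pt : ∀ y, (2⁻¹ : ℝ≥0∞) * (min (r0 y) t' + min (r1 y) t')
        ≤ min ((2⁻¹ : ℝ≥0∞) * (r0 y + r1 y)) t' := by
      intro y
      refine le_min ?_ ?_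
      · exact mul_le_mul_right (add_le_add (min_le_left _ _) (min_le_left _ _)) _
      · calc (2⁻¹ : ℝ≥0∞) * (min (r0 y) t' + min (r1 y) t')
            ≤ 2⁻¹ * (t' + t') :=
          mul_le_mul_right (add_le_add (min_le_right _ _) (min_le_right _ _)) _
        _ = t' := by
          rw [← two_mul, ← mul_assoc, ENNReal.inv_mul_cancel two_ne_zero ENNReal.ofNat_ne_top,
            one_mul]
    refine ae_eq_of_ae_le_of_lintegral_le (Filter.Eventually.of_forall hle_pt) ?_
      hgm.aemeasurable ?_
    · rw [hIntLHS]; exact hFitne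
    · rw [hIntLHS, ← hCeq]; exact hC_le
  have hae : ∀ᵐ y ∂νY, ∀ q : ℚ, 0 < q →
      (2⁻¹ : ℝ≥0∞) * (min (r0 y) (ENNReal.ofReal q) + min (r1 y) (ENNReal.ofReal q))
        = min ((2⁻¹ : ℝ≥0∞) * (r0 y + r1 y)) (ENNReal.ofReal q) := by
    rw [MeasureTheory.ae_all_iff]
    intro q
    by_cases hq : 0 < q
    · filter_upwards [key q (by exact_mod_cast hq)] with y hy _
      exact hy
    · filter_upwards with y hy
      exact absurd hy hq
  filter_upwards [hae] with y hy
  exact ennreal_eq_of_forall_rat hy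
end
end
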